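/- Let n ≥ 2 and r ≥ 1 be integers. Let X be the set of pairs (λ, a) where λ : ZMod r → ℕ satisfies Σ_{i ∈ ZMod r} λ(i) = n, a ∈ ZMod ((n+r)·r), and the image of a under the natural projection ZMod((n+r)·r) → ZMod r equals the weight w(λ) := Σ_{i ∈ ZMod r} i·λ(i) computed in ZMod r. Let the group ZMod r act on X by m·(λ, a) = (σ^m λ, a + m·(n+r)), where (σ^m λ)(i) = λ(i − m) is the cyclic shift and m·(n+r) is computed in ZMod((n+r)·r) via any integer lift of m (well defined since r·(n+r) ≡ 0 in ZMod((n+r)·r)). Then this action is free, and the number of orbits equals the binomial coefficient C(n + r, n). -/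
import Mathlib


/-- The defining condition for the parameter set `X` of simple modules of the rational
principal W-superalgebra `W_spr(n,r)`: a pair `(λ, a)` with `λ : ZMod r → ℕ` of total sum
`n` and `a : ZMod ((n+r)·r)` whose reduction mod `r` equals the weight
`Σ i·λ(i) ∈ ZMod r`. -/
def sprinCond (n r : ℕ) (p : (ZMod r → ℕ) × ZMod ((n + r) * r)) : Prop :=
  (∑ i ∈ Finset.range r, p.1 (i : ZMod r)) = n ∧
  ZMod.castHom (dvd_mul_left r (n + r)) (ZMod r) p.2 =
    ∑ i ∈ Finset.range r, (i : ZMod r) * (p.1 (i : ZMod r) : ZMod r)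

/-- The `ZMod r`-action: `m · (λ, a) = (σ^m λ, a + m·(n+r))`, where `(σ^m λ)(i) = λ(i − m)`
and `m·(n+r)` is computed in `ZMod ((n+r)·r)` via the integer lift `m.val`. -/
def sprinAct (n r : ℕ) (m : ZMod r) (p : (ZMod r → ℕ) × ZMod ((n + r) * r)) :
    (ZMod r → ℕ) × ZMod ((n + r) * r) :=
  (fun i => p.1 (i - m),
    p.2 + (m.val : ZMod ((n + r) * r)) * ((n + r : ℕ) : ZMod ((n + r) * r)))

section Aux

variable (n r : ℕ)

/-- Sums over `Finset.range r` of functions on `ZMod r` are sums over `univ`. -/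
lemma sum_range_zmod [NeZero r] {M : Type*} [AddCommMonoid M] (f : ZMod r → M) :
    ∑ i ∈ Finset.range r, f (i : ZMod r) = ∑ i : ZMod r, f i := by
  refine Finset.sum_nbij' (fun i => (i : ZMod r)) (fun a => a.val) ?_ ?_ ?_ ?_ ?_
  · intro a _; exact Finset.mem_univ _
  · intro a _; exact Finset.mem_range.mpr (ZMod.val_lt a)
  · intro a ha; exact ZMod.val_cast_of_lt (Finset.mem_range.mp ha)
  · intro a _; exact ZMod.natCast_rightInverse a
  · intro a _; rfl

/-- If `a ≡ b [MOD r]` then `a·(n+r) = b·(n+r)` in `ZMod ((n+r)*r)`. -/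
lemma mul_nr_congr {a b : ℕ} (h : a ≡ b [MOD r]) :
    (a : ZMod ((n + r) * r)) * ((n + r : ℕ) : ZMod ((n + r) * r)) =
      (b : ZMod ((n + r) * r)) * ((n + r : ℕ) : ZMod ((n + r) * r)) := by
  obtain ⟨k, hk⟩ := h.dvd
  have hz : ((((b : ℤ) - a) * (n + r) : ℤ) : ZMod ((n + r) * r)) = 0 := by
    rw [ZMod.intCast_zmod_eq_zero_iff_dvd]
    exact ⟨k, by rw [hk]; push_cast; ring⟩
  push_cast at hz ⊢
  linear_combination -hz

lemma sprinCond_act [NeZero r] (m : ZMod r) (p : (ZMod r → ℕ) × ZMod ((n + r) * r))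
    (hp : sprinCond n r p) : sprinCond n r (sprinAct n r m p) := by
  obtain ⟨h1, h2⟩ := hp
  rw [sum_range_zmod] at h1
  rw [sum_range_zmod r (fun j : ZMod r => j * (p.1 j : ZMod r))] at h2
  constructor
  · show (∑ i ∈ Finset.range r, (sprinAct n r m p).1 (i : ZMod r)) = n
    rw [sum_range_zmod]
    exact (Fintype.sum_equiv (Equiv.subRight m) _ _ (fun i => rfl)).trans h1
  · show ZMod.castHom (dvd_mul_left r (n + r)) (ZMod r) (sprinAct n r m p).2
        = ∑ i ∈ Finset.range r, (i : ZMod r) * ((sprinAct n r m p).1 (i : ZMod r) : ZMod r)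
    rw [sum_range_zmod r (fun j : ZMod r => j * ((sprinAct n r m p).1 j : ZMod r))]
    have key : ∑ i : ZMod r, i * ((sprinAct n r m p).1 i : ZMod r)
        = ∑ j : ZMod r, (j + m) * (p.1 j : ZMod r) := by
      refine (Fintype.sum_equiv (Equiv.addRight m) _ _ (fun j => ?_)).symm
      simp [sprinAct]
    rw [key]
    have hsum : (∑ j : ZMod r, (p.1 j : ZMod r)) = (n : ZMod r) := by
      have hc := congrArg (fun t : ℕ => (t : ZMod r)) h1
      push_cast at hc
      exact hc
    have hcast : (ZMod.castHom (dvd_mul_left r (n + r)) (ZMod r))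
        ((m.val : ZMod ((n + r) * r)) * ((n + r : ℕ) : ZMod ((n + r) * r)))
        = m * (n : ZMod r) := by
      rw [map_mul, map_natCast, map_natCast, ZMod.natCast_rightInverse]
      push_cast
      simp [ZMod.natCast_self]
    simp only [sprinAct, map_add, h2, hcast]
    rw [Finset.sum_congr rfl (fun j _ => add_mul j m (p.1 j : ZMod r)), Finset.sum_add_distrib,
      ← Finset.mul_sum, hsum]

lemma sprinAct_zero [NeZero r] (p : (ZMod r → ℕ) × ZMod ((n + r) * r)) :
    sprinAct n r 0 p = p := by
  simp [sprinAct, ZMod.val_zero]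

lemma sprinAct_add [NeZero r] (m m' : ZMod r) (p : (ZMod r → ℕ) × ZMod ((n + r) * r)) :
    sprinAct n r (m + m') p = sprinAct n r m (sprinAct n r m' p) := by
  refine Prod.ext ?_ ?_
  · funext i; simp [sprinAct, sub_sub]
  · have hmod : (m + m').val ≡ m.val + m'.val [MOD r] := by
      simp [Nat.ModEq, ZMod.val_add, Nat.mod_mod]
    have := mul_nr_congr n r hmod
    simp only [sprinAct]
    rw [this]
    push_cast
    ring

/-- The natural `ZMod r` additive action on the parameter set. -/
instance sprinAddAction [NeZero r] : AddAction (ZMod r) {p // sprinCond n r p} where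
  vadd m p := ⟨sprinAct n r m p.1, sprinCond_act n r m p.1 p.2⟩
  zero_vadd p := Subtype.ext (sprinAct_zero n r p.1)
  add_vadd m m' p := Subtype.ext (sprinAct_add n r m m' p.1)

lemma sprin_vadd_def [NeZero r] (m : ZMod r) (p : {p // sprinCond n r p}) :
    (m +ᵥ p).1 = sprinAct n r m p.1 := rfl

/-- Freeness of the action. -/
lemma sprin_free (hn : 2 ≤ n) (hr : 1 ≤ r) (m : ZMod r)
    (p : (ZMod r → ℕ) × ZMod ((n + r) * r)) (hact : sprinAct n r m p = p) : m = 0 := by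
  haveI : NeZero r := ⟨by omega⟩
  haveI : NeZero ((n + r) * r) := ⟨by positivity⟩
  have h2 := congrArg Prod.snd hact
  simp only [sprinAct] at h2
  have hz : ((m.val * (n + r) : ℕ) : ZMod ((n + r) * r)) = 0 := by
    push_cast at h2 ⊢
    linear_combination h2
  rw [ZMod.natCast_eq_zero_iff] at hz
  have hdvd : r ∣ m.val := by
    have h' : (n + r) * r ∣ (n + r) * m.val := by
      rwa [Nat.mul_comm m.val (n + r)] at hz
    exact (mul_dvd_mul_iff_left (by omega : (n + r) ≠ 0)).mp h'
  have hv : m.val = 0 := Nat.eq_zero_of_dvd_of_lt hdvd (ZMod.val_lt m)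
  exact (ZMod.val_eq_zero m).mp hv

end Aux

section Count

variable (n r : ℕ) [NeZero r]

/-- The reduction map `ZMod ((n+r)r) → ZMod r` as an additive monoid hom. -/
noncomputable def sprinPhi : ZMod ((n + r) * r) →+ ZMod r :=
  (ZMod.castHom (dvd_mul_left r (n + r)) (ZMod r)).toAddMonoidHom

lemma sprinPhi_apply (a : ZMod ((n + r) * r)) :
    sprinPhi n r a = ZMod.castHom (dvd_mul_left r (n + r)) (ZMod r) a := rfl

lemma sprinPhi_surjective : Function.Surjective (sprinPhi n r) := fun c =>
  ⟨((c.val : ℕ) : ZMod ((n + r) * r)), by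
    rw [sprinPhi_apply, map_natCast]
    exact ZMod.natCast_rightInverse c⟩

lemma card_sprinKer (hr : 1 ≤ r) : Nat.card (AddMonoidHom.ker (sprinPhi n r)) = n + r := by
  have h := AddSubgroup.card_eq_card_quotient_mul_card_addSubgroup
    (AddMonoidHom.ker (sprinPhi n r))
  rw [Nat.card_zmod] at h
  have hq : Nat.card (ZMod ((n + r) * r) ⧸ AddMonoidHom.ker (sprinPhi n r)) = r := by
    rw [Nat.card_congr (QuotientAddGroup.quotientKerEquivOfSurjective (sprinPhi n r)
      (sprinPhi_surjective n r)).toEquiv, Nat.card_zmod]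
  rw [hq] at h
  refine Nat.eq_of_mul_eq_mul_left (show 0 < r by omega) ?_
  rw [← h, Nat.mul_comm]

lemma sprinCond_iff (p : (ZMod r → ℕ) × ZMod ((n + r) * r)) : sprinCond n r p ↔
    (∑ i : ZMod r, p.1 i = n) ∧ ZMod.castHom (dvd_mul_left r (n + r)) (ZMod r) p.2
      = ∑ i : ZMod r, (i : ZMod r) * (p.1 i : ZMod r) := by
  unfold sprinCond
  rw [sum_range_zmod r p.1, sum_range_zmod r (fun j : ZMod r => j * (p.1 j : ZMod r))]

/-- The weight of `λ`. -/
noncomputable def sprinW (f : ZMod r → ℕ) : ZMod r := ∑ i : ZMod r, (i : ZMod r) * (f i : ZMod r)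

/-- The parameter set is equivalent to (compositions of `n`) × (kernel of reduction). -/
noncomputable def sprinEquiv :
    {p // sprinCond n r p} ≃
      ({f : ZMod r → ℕ // ∑ i : ZMod r, f i = n} × AddMonoidHom.ker (sprinPhi n r)) where
  toFun p := (⟨p.1.1, ((sprinCond_iff n r p.1).mp p.2).1⟩,
    ⟨p.1.2 - (((sprinW r p.1.1).val : ℕ) : ZMod ((n + r) * r)), by
      rw [AddMonoidHom.mem_ker, map_sub, sprinPhi_apply, sprinPhi_apply, map_natCast,
        ((sprinCond_iff n r p.1).mp p.2).2, ZMod.natCast_rightInverse, sprinW, sub_self]⟩)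
  invFun fk := ⟨(fk.1.1, fk.2.1 + (((sprinW r fk.1.1).val : ℕ) : ZMod ((n + r) * r))), by
    rw [sprinCond_iff]
    refine ⟨fk.1.2, ?_⟩
    have hk : sprinPhi n r fk.2.1 = 0 := AddMonoidHom.mem_ker.mp fk.2.2
    rw [sprinPhi_apply] at hk
    rw [map_add, hk, map_natCast, ZMod.natCast_rightInverse, zero_add, sprinW]⟩
  left_inv p := by
    apply Subtype.ext
    exact Prod.ext rfl (by simp)
  right_inv fk := by
    refine Prod.ext (Subtype.ext rfl) (Subtype.ext ?_)
    simp

lemma card_compositions : Nat.card {f : ZMod r → ℕ // ∑ i : ZMod r, f i = n}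
    = (r + n - 1).choose n := by
  classical
  rw [← Nat.card_congr (Sym.equivNatSumOfFintype (ZMod r) n), Nat.card_eq_fintype_card,
    Sym.card_sym_eq_choose, ZMod.card]

lemma choose_identity (hr : 1 ≤ r) :
    (r + n - 1).choose n * (n + r) = (n + r).choose n * r := by
  obtain ⟨s, rfl⟩ : ∃ s, r = s + 1 := ⟨r - 1, by omega⟩
  have h1 := Nat.add_one_mul_choose_eq (n + s) s
  have h2 : (n + s).choose s = (n + s).choose n := by
    rw [← Nat.choose_symm (Nat.le_add_right n s)]
    congr 1
    omega
  have h3 : (n + s + 1).choose (s + 1) = (n + s + 1).choose n := by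
    rw [← Nat.choose_symm (show n ≤ n + s + 1 by omega)]
    congr 1
    omega
  rw [h2, h3] at h1
  rw [show s + 1 + n - 1 = n + s by omega, show n + (s + 1) = (n + s) + 1 by omega,
    mul_comm]
  rw [show n + s + 1 = (n + s).succ from rfl] at h1 ⊢
  exact h1

end Count

/-- **Classification count for the rational principal W-superalgebra `W_spr(n,r)`.**
The `ZMod r`-action on the parameter set is free and the number of orbits is
`C(n + r, n)`. -/
theorem stmt_12 (n r : ℕ) (hn : 2 ≤ n) (hr : 1 ≤ r) :
    (∀ (m : ZMod r) (p : (ZMod r → ℕ) × ZMod ((n + r) * r)),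
      sprinCond n r p → sprinAct n r m p = p → m = 0) ∧
    Nat.card (Quot (fun (x y : {p // sprinCond n r p}) =>
      ∃ m : ZMod r, sprinAct n r m x.1 = y.1)) = (n + r).choose n := by
  haveI : NeZero r := ⟨by omega⟩
  constructor
  · exact fun m p _ h => sprin_free n r hn hr m p h
  · have hstab : ∀ x : {p // sprinCond n r p}, AddAction.stabilizer (ZMod r) x = ⊥ := by
      intro x
      ext m
      simp only [AddAction.mem_stabilizer_iff, AddSubgroup.mem_bot]
      constructor
      · intro h
        exact sprin_free n r hn hr m x.1 (congrArg Subtype.val h)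
      · rintro rfl
        exact zero_vadd _ _
    have e1 := AddAction.selfEquivSigmaOrbitsQuotientStabilizer (ZMod r)
      {p // sprinCond n r p}
    have e2 : (Σ ω : Quotient (AddAction.orbitRel (ZMod r) {p // sprinCond n r p}),
        ZMod r ⧸ AddAction.stabilizer (ZMod r) ω.out) ≃
        Quotient (AddAction.orbitRel (ZMod r) {p // sprinCond n r p}) × ZMod r := by
      refine (Equiv.sigmaCongrRight fun ω => ?_).trans (Equiv.sigmaEquivProd _ _)
      rw [hstab]
      exact QuotientAddGroup.quotientBot.toEquiv
    have hiff : ∀ a b : {p // sprinCond n r p},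
        (∃ m : ZMod r, sprinAct n r m a.1 = b.1) ↔
          AddAction.orbitRel (ZMod r) {p // sprinCond n r p} a b := by
      intro a b
      rw [AddAction.orbitRel_apply, AddAction.mem_orbit_iff]
      constructor
      · rintro ⟨m, hm⟩
        have hma : m +ᵥ a = b := Subtype.ext hm
        exact ⟨-m, by rw [← hma, vadd_vadd, neg_add_cancel, zero_vadd]⟩
      · rintro ⟨m, rfl⟩
        refine ⟨-m, ?_⟩
        show ((-m) +ᵥ (m +ᵥ b)).1 = b.1
        rw [vadd_vadd, neg_add_cancel, zero_vadd]
    have eq1 : Nat.card (Quot (fun (x y : {p // sprinCond n r p}) =>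
        ∃ m : ZMod r, sprinAct n r m x.1 = y.1)) =
        Nat.card (Quotient (AddAction.orbitRel (ZMod r) {p // sprinCond n r p})) :=
      Nat.card_congr (Quot.congrRight hiff)
    have hcard1 : Nat.card {p // sprinCond n r p} =
        Nat.card (Quotient (AddAction.orbitRel (ZMod r) {p // sprinCond n r p})) * r := by
      rw [Nat.card_congr (e1.trans e2), Nat.card_prod, Nat.card_zmod]
    have hcard2 : Nat.card {p // sprinCond n r p} = (r + n - 1).choose n * (n + r) := by
      rw [Nat.card_congr (sprinEquiv n r), Nat.card_prod, card_compositions,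
        card_sprinKer n r hr]
    rw [eq1]
    refine Nat.eq_of_mul_eq_mul_right (show 0 < r by omega) ?_
    rw [← hcard1, hcard2, choose_identity n r hr]
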